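/- For every pair (j₁,j₂) ∈ Θ₂ and every λ ∈ (0,1/8] with ‖F(x₀)‖ < 2λ, one has |μ(j₁,j₂,p₀,λ)| ≤ K (λ/|j₂|)^{1/2}, where K is a constant depending only on c₁ and c₂. -/

import Mathlib

open Set Real MeasureTheory

/-- Distance from a real number to the nearest integer. -/
noncomputable def nint (y : ℝ) : ℝ := |y - round y|

set_option maxHeartbeats 1000000 in
theorem mu_p0_bound_small_norm
    (c₁ c₂ : ℝ) (hc₁ : 0 < c₁) (hc₁₂ : c₁ ≤ c₂) :
    ∃ K : ℝ, 0 < K ∧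
      ∀ (ξ η : ℝ), ξ ≤ η →
      ∀ (f f' f'' : ℝ → ℝ),
        (∀ x, HasDerivAt f (f' x) x) →
        (∀ x, HasDerivAt f' (f'' x) x) →
        Continuous f'' →
        (∀ x, c₁ ≤ |f'' x| ∧ |f'' x| ≤ c₂) →
      ∀ Mmax : ℝ, IsGreatest ((fun x => |f' x|) '' Icc ξ η) Mmax →
      ∀ j₁ j₂ : ℤ, j₂ ≠ 0 → |(j₁ : ℝ)| ≤ 2 * (1 + Mmax) * |(j₂ : ℝ)| →
      ∀ x₀ : ℝ, (j₁ : ℝ) + (j₂ : ℝ) * f' x₀ = 0 →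
      ∀ p₀ : ℤ,
        -(1/2) < ((j₁ : ℝ) * x₀ + (j₂ : ℝ) * f x₀) - (p₀ : ℝ) →
        ((j₁ : ℝ) * x₀ + (j₂ : ℝ) * f x₀) - (p₀ : ℝ) ≤ 1/2 →
      ∀ lam : ℝ, 0 < lam → lam ≤ 1/8 →
        nint ((j₁ : ℝ) * x₀ + (j₂ : ℝ) * f x₀) < 2 * lam →
        (volume {x ∈ Icc ξ η | |(j₁ : ℝ) * x + (j₂ : ℝ) * f x - (p₀ : ℝ)| < lam}).toReal
          ≤ K * (lam / |(j₂ : ℝ)|) ^ ((1 : ℝ)/2) := by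
  refine ⟨2 * Real.sqrt (6 / c₁), by
    have : 0 < Real.sqrt (6 / c₁) := Real.sqrt_pos.2 (by positivity)
    linarith, ?_⟩
  intro ξ η hξη f f' f'' hf hf' hf''c hbound Mmax hM j₁ j₂ hj₂ hj₁ x₀ hx₀ p₀ hp₀l hp₀r
    lam hlam hlam8 hnint
  set J : ℝ := |(j₂ : ℝ)| with hJdef
  have hJ : 0 < J := abs_pos.2 (by exact_mod_cast hj₂)
  -- sign of j₂ * f''
  set g : ℝ → ℝ := fun x => (j₂ : ℝ) * f'' x with hgdef
  have hgabs : ∀ x, c₁ * J ≤ |g x| := by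
    intro x
    have h1 := (hbound x).1
    have : |g x| = J * |f'' x| := by rw [hgdef]; simp [abs_mul, mul_comm, hJdef]
    rw [this]
    calc c₁ * J = J * c₁ := by ring
    _ ≤ J * |f'' x| := by nlinarith
  have hgc : Continuous g := continuous_const.mul hf''c
  have key : ∀ a b : ℝ, g a < 0 → 0 < g b → False := by
    intro a b ha hb
    have h0 : (0 : ℝ) ∈ uIcc (g a) (g b) := Set.mem_uIcc.2 (Or.inl ⟨ha.le, hb.le⟩)
    obtain ⟨c, _, hc⟩ := intermediate_value_uIcc (hgc.continuousOn) h0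
    have := hgabs c
    rw [hc] at this
    simp at this
    nlinarith
  set s : ℝ := if 0 < g x₀ then 1 else -1 with hsdef
  have hs1 : |s| = 1 := by
    rw [hsdef]; split <;> simp
  have hs : ∀ x, c₁ * J ≤ s * g x := by
    intro x
    have hgx := hgabs x
    have hgxne : g x ≠ 0 := by
      intro h; rw [h] at hgx; simp at hgx; nlinarith
    by_cases h : 0 < g x₀
    · have hpos : 0 < g x := by
        rcases hgxne.lt_or_gt with h' | h'
        · exact absurd (key x x₀ h' h) (fun h => h)
        · exact h'
      rw [hsdef, if_pos h, one_mul]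
      rwa [abs_of_pos hpos] at hgx
    · have hx₀ne : g x₀ ≠ 0 := by
        intro h; have := hgabs x₀; rw [h] at this; simp at this; nlinarith
      have hneg0 : g x₀ < 0 := (not_lt.1 h).lt_of_ne hx₀ne
      have hneg : g x < 0 := by
        rcases hgxne.lt_or_gt with h' | h'
        · exact h'
        · exact absurd (key x₀ x hneg0 h') (fun h => h)
      rw [hsdef, if_neg h, neg_one_mul]
      rwa [abs_of_neg hneg] at hgx
  -- derivative setup
  have hFd : ∀ x, HasDerivAt (fun x => (j₁ : ℝ) * x + (j₂ : ℝ) * f x)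
      ((j₁ : ℝ) + (j₂ : ℝ) * f' x) x := by
    intro x
    have h1 : HasDerivAt (fun x : ℝ => (j₁ : ℝ) * x) (j₁ : ℝ) x := by
      simpa using (hasDerivAt_id x).const_mul (j₁ : ℝ)
    exact h1.add ((hf x).const_mul _)
  set H : ℝ → ℝ := fun x => s * ((j₁ : ℝ) * x + (j₂ : ℝ) * f x)
      - (c₁ * J / 2) * (x - x₀) ^ 2 with hHdef
  set H' : ℝ → ℝ := fun x => s * ((j₁ : ℝ) + (j₂ : ℝ) * f' x)
      - (c₁ * J) * (x - x₀) with hH'def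
  have hHd : ∀ x, HasDerivAt H (H' x) x := by
    intro x
    have h2 : HasDerivAt (fun x : ℝ => (x - x₀) ^ 2) (2 * (x - x₀)) x := by
      simpa using ((hasDerivAt_id x).sub_const x₀).fun_pow 2
    have h3 := ((hFd x).const_mul s).fun_sub (h2.const_mul (c₁ * J / 2))
    refine h3.congr_deriv ?_
    rw [hH'def]; ring
  have hH'd : ∀ x, HasDerivAt H' (s * g x - c₁ * J) x := by
    intro x
    have h1 : HasDerivAt (fun x => (j₁ : ℝ) + (j₂ : ℝ) * f' x) ((j₂ : ℝ) * f'' x) x := by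
      simpa using ((hf' x).const_mul (j₂ : ℝ)).const_add (j₁ : ℝ)
    have h2 : HasDerivAt (fun x : ℝ => (c₁ * J) * (x - x₀)) (c₁ * J) x := by
      simpa using ((hasDerivAt_id x).sub_const x₀).const_mul (c₁ * J)
    exact (h1.const_mul s).sub h2
  have hH'mono : Monotone H' :=
    monotone_of_deriv_nonneg (fun x => (hH'd x).differentiableAt)
      (fun x => by rw [(hH'd x).deriv]; have := hs x; linarith)
  have hH'x₀ : H' x₀ = 0 := by
    rw [hH'def]; simp only; rw [hx₀]; ring
  have hHdiff : Differentiable ℝ H := fun x => (hHd x).differentiableAt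
  have hmin : ∀ x, H x₀ ≤ H x := by
    intro x
    rcases le_total x₀ x with hle | hle
    · have hm := monotoneOn_of_deriv_nonneg (convex_Icc x₀ x)
        hHdiff.continuous.continuousOn hHdiff.differentiableOn
        (fun t ht => by
          rw [(hHd t).deriv]
          rw [interior_Icc] at ht
          have := hH'mono ht.1.le
          linarith [hH'x₀])
      exact hm (left_mem_Icc.2 hle) (right_mem_Icc.2 hle) hle
    · have hm := antitoneOn_of_deriv_nonpos (convex_Icc x x₀)
        hHdiff.continuous.continuousOn hHdiff.differentiableOn
        (fun t ht => by
          rw [(hHd t).deriv]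
          rw [interior_Icc] at ht
          have := hH'mono ht.2.le
          linarith [hH'x₀])
      exact hm (left_mem_Icc.2 hle) (right_mem_Icc.2 hle) hle
  -- the nearest integer to F x₀ is p₀
  have hlam4 : 2 * lam ≤ 1 / 4 := by linarith
  have hy4 : |((j₁ : ℝ) * x₀ + (j₂ : ℝ) * f x₀)
      - (round ((j₁ : ℝ) * x₀ + (j₂ : ℝ) * f x₀) : ℝ)| < 2 * lam := hnint
  have hround : ((round ((j₁ : ℝ) * x₀ + (j₂ : ℝ) * f x₀) : ℤ) : ℝ) = (p₀ : ℝ) := by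
    have h0 : (round ((j₁ : ℝ) * x₀ + (j₂ : ℝ) * f x₀) - p₀ : ℤ) = 0 := by
      have habs : |((round ((j₁ : ℝ) * x₀ + (j₂ : ℝ) * f x₀) - p₀ : ℤ) : ℝ)| < 1 := by
        rw [abs_lt]; push_cast
        rcases abs_lt.1 hy4 with ⟨ha, hb⟩
        constructor <;> linarith
      have : |(round ((j₁ : ℝ) * x₀ + (j₂ : ℝ) * f x₀) - p₀ : ℤ)| < 1 := by
        exact_mod_cast habs
      have := abs_lt.1 this
      omega
    have : round ((j₁ : ℝ) * x₀ + (j₂ : ℝ) * f x₀) = p₀ := by omega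
    exact_mod_cast this
  have hclose : |((j₁ : ℝ) * x₀ + (j₂ : ℝ) * f x₀) - (p₀ : ℝ)| < 2 * lam := by
    rw [← hround]; exact hy4
  -- inclusion in a small interval
  set r : ℝ := Real.sqrt (6 * lam / (c₁ * J)) with hrdef
  have hrnn : 0 ≤ r := Real.sqrt_nonneg _
  have hsub : {x ∈ Icc ξ η | |(j₁ : ℝ) * x + (j₂ : ℝ) * f x - (p₀ : ℝ)| < lam}
      ⊆ Icc (x₀ - r) (x₀ + r) := by
    rintro x ⟨hxI, hxlt⟩
    have h1 : H x₀ ≤ H x := hmin x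
    rw [hHdef] at h1
    simp only at h1
    have h2 : c₁ * J / 2 * (x - x₀) ^ 2
        ≤ s * (((j₁ : ℝ) * x + (j₂ : ℝ) * f x) - ((j₁ : ℝ) * x₀ + (j₂ : ℝ) * f x₀)) := by
      nlinarith [h1, sq_nonneg (x - x₀)]
    have h3 : s * (((j₁ : ℝ) * x + (j₂ : ℝ) * f x) - ((j₁ : ℝ) * x₀ + (j₂ : ℝ) * f x₀))
        ≤ |((j₁ : ℝ) * x + (j₂ : ℝ) * f x) - ((j₁ : ℝ) * x₀ + (j₂ : ℝ) * f x₀)| := by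
      calc s * (((j₁ : ℝ) * x + (j₂ : ℝ) * f x) - ((j₁ : ℝ) * x₀ + (j₂ : ℝ) * f x₀))
          ≤ |s * (((j₁ : ℝ) * x + (j₂ : ℝ) * f x) - ((j₁ : ℝ) * x₀ + (j₂ : ℝ) * f x₀))| :=
            le_abs_self _
        _ = _ := by rw [abs_mul, hs1, one_mul]
    have h4 : |((j₁ : ℝ) * x + (j₂ : ℝ) * f x) - ((j₁ : ℝ) * x₀ + (j₂ : ℝ) * f x₀)|
        < 3 * lam := by
      rcases abs_lt.1 hxlt with ⟨a1, a2⟩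
      rcases abs_lt.1 hclose with ⟨b1, b2⟩
      rw [abs_lt]
      constructor <;> linarith
    have h5 : (x - x₀) ^ 2 ≤ 6 * lam / (c₁ * J) := by
      have h25 : c₁ * J / 2 * (x - x₀) ^ 2 < 3 * lam := lt_of_le_of_lt (h2.trans h3) h4
      rw [le_div_iff₀ (mul_pos hc₁ hJ)]
      linarith [h25]
    have h6 : |x - x₀| ≤ r := by
      rw [hrdef, ← Real.sqrt_sq_eq_abs]
      exact Real.sqrt_le_sqrt h5
    rcases abs_le.1 h6 with ⟨h7, h8⟩
    exact ⟨by linarith, by linarith⟩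
  calc (volume {x ∈ Icc ξ η | |(j₁ : ℝ) * x + (j₂ : ℝ) * f x - (p₀ : ℝ)| < lam}).toReal
      ≤ (volume (Icc (x₀ - r) (x₀ + r))).toReal :=
        ENNReal.toReal_mono (measure_Icc_lt_top).ne (measure_mono hsub)
    _ = 2 * r := by
        rw [Real.volume_Icc, ENNReal.toReal_ofReal (by linarith)]
        ring
    _ ≤ 2 * Real.sqrt (6 / c₁) * (lam / J) ^ ((1 : ℝ) / 2) := by
        rw [← Real.sqrt_eq_rpow]
        have hreq : r = Real.sqrt (6 / c₁) * Real.sqrt (lam / J) := by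
          rw [hrdef, ← Real.sqrt_mul (by positivity)]
          congr 1
          field_simp
        rw [hreq]
        rw [mul_assoc]
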